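/- Let p be a prime, n = 2^p − 1, ω = exp(2πi/n), and D ∈ Mₙ(ℂ) the diagonal matrix with diagonal entries ω⁰, ω¹, …, ω^{n−1}. Then there exists a permutation σ of {0, 1, …, n−1} whose permutation matrix T (a unitary matrix) satisfies T⁻¹ D T = D², and the characteristic polynomial of T equals (X − 1) · (X^p − 1)^{(n−1)/p}; in particular the spectrum of T consists of every p-th root of unity with multiplicity (2^p − 2)/p, together with an additional eigenvalue 1 of multiplicity 1. -/

import Mathlib

open Polynomial

/-- The diagonal matrix `D = diag(ω⁰, ω¹, …, ω^{n-1})` with `ω = exp(2πi/n)`. -/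
noncomputable def Dmat (n : ℕ) : Matrix (Fin n) (Fin n) ℂ :=
  Matrix.diagonal fun k : Fin n =>
    Complex.exp (2 * Real.pi * Complex.I / n) ^ (k : ℕ)

/-- The permutation matrix of `σ`: the matrix `T` with `T (σ k) k = 1` and all other
entries `0`. -/
def permMatC {n : ℕ} (σ : Equiv.Perm (Fin n)) : Matrix (Fin n) (Fin n) ℂ :=
  Matrix.of fun i k => if i = σ k then 1 else 0

namespace Stmt16Aux

open Matrix

variable {α β : Type*} [Fintype α] [DecidableEq α] [Fintype β] [DecidableEq β]

/-- generic permutation matrix -/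
def pM {γ : Type*} [DecidableEq γ] (σ : Equiv.Perm γ) : Matrix γ γ ℂ :=
  Matrix.of fun i k => if i = σ k then 1 else 0

lemma pM_star_mul (σ : Equiv.Perm α) : star (pM σ) * pM σ = 1 := by
  ext i k
  simp only [Matrix.mul_apply, Matrix.star_apply, pM, Matrix.of_apply, apply_ite (star : ℂ → ℂ),
    star_one, star_zero, ite_mul, one_mul, zero_mul, Matrix.one_apply]
  rw [Finset.sum_ite_eq' Finset.univ (σ i)]
  simp [σ.injective.eq_iff, eq_comm]

lemma pM_unitary (σ : Equiv.Perm α) : pM σ ∈ Matrix.unitaryGroup α ℂ :=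
  ⟨pM_star_mul σ, mul_eq_one_comm.mp (pM_star_mul σ)⟩

lemma pM_reindex (σ : Equiv.Perm α) (E : α ≃ β) :
    Matrix.reindex E E (pM σ) = pM (E.permCongr σ) := by
  ext i k
  simp only [Matrix.reindex_apply, Matrix.submatrix_apply, pM, Matrix.of_apply,
    Equiv.permCongr_apply]
  exact if_congr (Equiv.symm_apply_eq E) rfl rfl

lemma pM_sumCongr (σ : Equiv.Perm α) (τ : Equiv.Perm β) :
    (pM (Equiv.sumCongr σ τ) : Matrix (α ⊕ β) (α ⊕ β) ℂ) =
      Matrix.fromBlocks (pM σ) 0 0 (pM τ) := by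
  ext i k
  rcases i with i | i <;> rcases k with k | k <;>
    simp [pM, Matrix.fromBlocks]

lemma pM_prodCongr (σ : Equiv.Perm α) :
    (pM (Equiv.prodCongr σ (Equiv.refl β)) : Matrix (α × β) (α × β) ℂ) =
      Matrix.blockDiagonal (fun _ : β => pM σ) := by
  ext ⟨i, q⟩ ⟨k, q'⟩
  by_cases h : q = q' <;>
    simp [pM, Matrix.blockDiagonal_apply, Prod.ext_iff, h, and_comm]

lemma charmatrix_blockDiagonal (M : β → Matrix α α ℂ) :
    charmatrix (Matrix.blockDiagonal M) = Matrix.blockDiagonal fun q => charmatrix (M q) := by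
  ext ⟨i, q⟩ ⟨k, q'⟩
  simp only [charmatrix_apply, Matrix.blockDiagonal_apply, Matrix.diagonal_apply, Prod.mk.injEq]
  by_cases h : q = q' <;> simp [h, Prod.ext_iff, and_comm]

lemma charpoly_blockDiagonal (M : β → Matrix α α ℂ) :
    (Matrix.blockDiagonal M).charpoly = ∏ q : β, (M q).charpoly := by
  unfold Matrix.charpoly
  rw [charmatrix_blockDiagonal, Matrix.det_blockDiagonal]

lemma charpoly_one_unit : (pM (1 : Equiv.Perm Unit)).charpoly = X - 1 := by
  have h : pM (1 : Equiv.Perm Unit) = 1 := by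
    ext i k; simp [pM, Matrix.one_apply, Subsingleton.elim i k]
  rw [h, Matrix.charpoly, Matrix.det_unique]
  simp [charmatrix_apply_eq]

lemma charpoly_cycle (m : ℕ) :
    (pM (Equiv.addRight 1 : Equiv.Perm (Fin (m + 2)))).charpoly = X ^ (m + 2) - 1 := by
  set A := charmatrix (pM (Equiv.addRight 1 : Equiv.Perm (Fin (m + 2)))) with hA
  have hAentry : ∀ i j : Fin (m + 2),
      A i j = (if i = j then X else 0) - (if i = j + 1 then 1 else 0) := by
    intro i j
    rw [hA, charmatrix_apply]
    simp [Matrix.diagonal_apply, pM, Equiv.addRight, apply_ite (Polynomial.C : ℂ → ℂ[X])]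
  have hlast0 : (Fin.last (m + 1) : Fin (m + 2)) ≠ 0 := by
    simp [Fin.ext_iff]
  have hdet : (pM (Equiv.addRight 1 : Equiv.Perm (Fin (m + 2)))).charpoly = A.det := rfl
  rw [hdet, Matrix.det_succ_row_zero]
  have hzero : ∀ j : Fin (m + 2), j ∉ ({0, Fin.last (m + 1)} : Finset (Fin (m + 2))) →
      (-1 : ℂ[X]) ^ (j : ℕ) * A 0 j * (A.submatrix Fin.succ j.succAbove).det = 0 := by
    intro j hj
    simp only [Finset.mem_insert, Finset.mem_singleton, not_or] at hj
    have h1 : (0 : Fin (m + 2)) ≠ j := fun h => hj.1 h.symm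
    have h2 : (0 : Fin (m + 2)) ≠ j + 1 := by
      intro h
      have hv := Fin.val_add_one j
      rw [if_neg hj.2] at hv
      rw [Fin.ext_iff, hv] at h
      simp at h
    rw [hAentry, if_neg h1, if_neg h2]
    ring
  rw [← Finset.sum_subset (Finset.subset_univ ({0, Fin.last (m + 1)} : Finset (Fin (m + 2))))
      (fun j _ hj => hzero j hj),
    Finset.sum_pair (Ne.symm hlast0)]
  have hA00 : A 0 0 = X := by
    rw [hAentry, if_pos rfl, if_neg ?_]
    · ring
    · intro h
      have hv := Fin.val_add_one (0 : Fin (m + 2))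
      rw [if_neg (Ne.symm hlast0)] at hv
      rw [Fin.ext_iff, hv] at h
      simp at h
  have hM0 : (A.submatrix Fin.succ (0 : Fin (m + 2)).succAbove).det = X ^ (m + 1) := by
    rw [Fin.succAbove_zero]
    have htri : (A.submatrix Fin.succ Fin.succ).BlockTriangular OrderDual.toDual := by
      intro i j hij
      have hij' : (i : ℕ) < (j : ℕ) := hij
      rw [Matrix.submatrix_apply, hAentry, if_neg, if_neg]
      · ring
      · intro h
        rcases eq_or_ne j (Fin.last m) with rfl | hjl
        · rw [Fin.succ_last, Fin.last_add_one] at h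
          exact Fin.succ_ne_zero i h
        · have hv := Fin.val_add_one j.succ
          rw [if_neg (fun hh => hjl (by rwa [← Fin.succ_last, Fin.succ_inj] at hh))] at hv
          rw [Fin.ext_iff, hv, Fin.val_succ, Fin.val_succ] at h
          omega
      · intro h
        rw [Fin.ext_iff, Fin.val_succ, Fin.val_succ] at h
        omega
    rw [Matrix.det_of_lowerTriangular _ htri]
    have hd : ∀ i : Fin (m + 1), (A.submatrix Fin.succ Fin.succ) i i = X := by
      intro i
      rw [Matrix.submatrix_apply, hAentry, if_pos rfl, if_neg, sub_zero]
      intro h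
      exact one_ne_zero (add_left_cancel (a := i.succ) (by rw [add_zero, ← h]))
    rw [Finset.prod_congr rfl fun i _ => hd i]
    simp
  have hA0last : A 0 (Fin.last (m + 1)) = -1 := by
    rw [hAentry, if_neg (Ne.symm hlast0), if_pos (by rw [Fin.last_add_one])]
    ring
  have hM1 : (A.submatrix Fin.succ (Fin.last (m + 1)).succAbove).det = (-1) ^ (m + 1) := by
    rw [Fin.succAbove_last]
    have hcs : ∀ j : Fin (m + 1), (j.castSucc : Fin (m + 2)) + 1 = j.succ :=
      fun j => Fin.coeSucc_eq_succ
    have htri : (A.submatrix Fin.succ Fin.castSucc).BlockTriangular id := by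
      intro i j hij
      have hij' : (j : ℕ) < (i : ℕ) := hij
      rw [Matrix.submatrix_apply, hAentry, if_neg, if_neg]
      · ring
      · rw [hcs]
        intro h
        rw [Fin.ext_iff, Fin.val_succ, Fin.val_succ] at h
        omega
      · intro h
        rw [Fin.ext_iff, Fin.val_succ, Fin.coe_castSucc] at h
        omega
    rw [Matrix.det_of_upperTriangular htri]
    have hd : ∀ i : Fin (m + 1), (A.submatrix Fin.succ Fin.castSucc) i i = -1 := by
      intro i
      rw [Matrix.submatrix_apply, hAentry, if_neg, hcs, if_pos rfl, zero_sub]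
      intro h
      rw [Fin.ext_iff, Fin.val_succ, Fin.coe_castSucc] at h
      omega
    rw [Finset.prod_congr rfl fun i _ => hd i]
    simp
  rw [hA00, hM0, hA0last, hM1]
  simp only [Fin.val_zero, Fin.val_last, pow_zero]
  have hs : ((-1 : ℂ[X]) ^ (m + 1)) * (-1) * (-1) ^ (m + 1) = -1 := by
    rw [mul_comm, ← mul_assoc, ← pow_add, ← two_mul, pow_mul]
    norm_num
  rw [hs]
  ring

end Stmt16Aux

open Stmt16Aux Matrix in
theorem stmt16 (p : ℕ) (hp : p.Prime) :
    ∃ σ : Equiv.Perm (Fin (2 ^ p - 1)),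
      permMatC σ ∈ Matrix.unitaryGroup (Fin (2 ^ p - 1)) ℂ ∧
      (permMatC σ)⁻¹ * Dmat (2 ^ p - 1) * permMatC σ = Dmat (2 ^ p - 1) ^ 2 ∧
      (permMatC σ).charpoly =
        (X - 1) * (X ^ p - 1) ^ ((2 ^ p - 2) / p) := by
  classical
  have hp2 : 2 ≤ p := hp.two_le
  obtain ⟨m, rfl⟩ : ∃ m, p = m + 2 := ⟨p - 2, by omega⟩
  set p := m + 2 with hpdef
  set n := 2 ^ p - 1 with hn
  have h2pn : 2 ^ p = n + 1 := by
    have : 1 ≤ 2 ^ p := Nat.one_le_two_pow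
    omega
  have hn3 : 3 ≤ n := by
    have : 2 ^ 2 ≤ 2 ^ p := Nat.pow_le_pow_right (by norm_num) hp2
    omega
  haveI : NeZero n := ⟨by omega⟩
  have h2p : (2 : ZMod n) ^ p = 1 := by
    have h1 : ((2 ^ p : ℕ) : ZMod n) = ((n + 1 : ℕ) : ZMod n) := by rw [h2pn]
    push_cast at h1
    rw [ZMod.natCast_self] at h1
    simpa using h1
  have hpow : ∀ k : ℕ, (2 : ZMod n) ^ (p * k) = 1 := fun k => by
    rw [pow_mul, h2p, one_pow]
  have hcan : ∀ (k : ℕ) (x y : ZMod n), 2 ^ k * x = 2 ^ k * y → x = y := by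
    intro k x y h
    have h2 := congrArg (fun z => (2 : ZMod n) ^ (k * (p - 1)) * z) h
    simp only [← mul_assoc, ← pow_add] at h2
    have he : k * (p - 1) + k = p * k := by
      have h1 : p - 1 + 1 = p := by omega
      calc k * (p - 1) + k = k * (p - 1 + 1) := by ring
      _ = p * k := by rw [h1]; ring
    rwa [he, hpow, one_mul, one_mul] at h2
  have hmod : ∀ k : ℕ, (2 : ZMod n) ^ (k % p) = 2 ^ k := by
    intro k
    conv_rhs => rw [← Nat.div_add_mod k p]
    rw [pow_add, hpow, one_mul]
  have hfree : ∀ (k : ℕ) (x : ZMod n), 0 < k → k < p → 2 ^ k * x = x → x = 0 := by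
    intro k x hk0 hkp hfix
    have hiter : ∀ t : ℕ, (2 : ZMod n) ^ (k * t) * x = x := by
      intro t
      induction t with
      | zero => simp
      | succ t ih => rw [Nat.mul_succ, pow_add, mul_assoc, hfix, ih]
    have hcop : Nat.Coprime k p :=
      (hp.coprime_iff_not_dvd.mpr (fun hdvd => by
        have := Nat.le_of_dvd hk0 hdvd; omega)).symm
    obtain ⟨a, -, ha⟩ := Nat.exists_mul_mod_eq_one_of_coprime hcop (by omega)
    have hka : k * a = p * (k * a / p) + 1 := by
      conv_lhs => rw [← Nat.div_add_mod (k * a) p]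
      rw [ha]
    have h2x : (2 : ZMod n) * x = x := by
      have := hiter a
      rwa [hka, pow_add, hpow, one_mul, pow_one] at this
    calc x = 2 * x - x := by ring
    _ = 0 := by rw [h2x, sub_self]
  -- the setoid of orbits on nonzero elements
  set Xt := {x : ZMod n // ¬x = 0} with hXt
  set r : Xt → Xt → Prop := fun x y => ∃ k : ℕ, (2 : ZMod n) ^ k * x.1 = y.1 with hr
  have hrequiv : Equivalence r := by
    constructor
    · exact fun x => ⟨0, by simp⟩
    · rintro x y ⟨k, hk⟩
      refine ⟨k * (p - 1), ?_⟩
      rw [← hk, ← mul_assoc, ← pow_add]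
      have he : k * (p - 1) + k = p * k := by
        have h1 : p - 1 + 1 = p := by omega
        calc k * (p - 1) + k = k * (p - 1 + 1) := by ring
        _ = p * k := by rw [h1]; ring
      rw [he, hpow, one_mul]
    · rintro x y z ⟨k, hk⟩ ⟨l, hl⟩
      exact ⟨l + k, by rw [pow_add, mul_assoc, hk, hl]⟩
  set s : Setoid Xt := ⟨r, hrequiv⟩ with hs
  set Q := Quotient s with hQ
  haveI : Fintype Q := Quotient.fintype s
  have hf0 : ∀ (j : Fin p) (q : Q), (2 : ZMod n) ^ (j : ℕ) * (q.out).1 ≠ 0 := by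
    intro j q h
    exact (q.out).2 (hcan (j : ℕ) _ 0 (by rw [h, mul_zero]))
  set f : Fin p × Q → Xt := fun jq => ⟨(2 : ZMod n) ^ (jq.1 : ℕ) * (jq.2.out).1, hf0 jq.1 jq.2⟩
    with hfdef
  have hfinj : Function.Injective f := by
    rintro ⟨j, q⟩ ⟨j', q'⟩ hEq
    have hv : (2 : ZMod n) ^ (j : ℕ) * (q.out).1 = 2 ^ (j' : ℕ) * (q'.out).1 :=
      congrArg Subtype.val hEq
    have hqq : q = q' := by
      have hrel : r q.out q'.out := by
        refine ⟨j'.val * (p - 1) + j.val, ?_⟩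
        rw [pow_add, mul_assoc, hv, ← mul_assoc, ← pow_add]
        have he : j'.val * (p - 1) + j'.val = p * j'.val := by
          have h1 : p - 1 + 1 = p := by omega
          calc j'.val * (p - 1) + j'.val = j'.val * (p - 1 + 1) := by ring
          _ = p * j'.val := by rw [h1]; ring
        rw [he, hpow, one_mul]
      calc q = ⟦q.out⟧ := (Quotient.out_eq q).symm
      _ = ⟦q'.out⟧ := Quotient.sound hrel
      _ = q' := Quotient.out_eq q'
    subst hqq
    have hjj : ∀ a b : Fin p, a ≤ b →
        (2 : ZMod n) ^ (a : ℕ) * (q.out).1 = 2 ^ (b : ℕ) * (q.out).1 → a = b := by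
      intro a b hab hEq2
      set d := b.val - a.val with hd
      have hbd : b.val = a.val + d := by
        have : a.val ≤ b.val := hab
        omega
      by_contra hne
      have hd0 : 0 < d := by
        rcases Nat.eq_zero_or_pos d with h0 | h0
        · exact absurd (Fin.ext (by omega)) hne
        · exact h0
      have hdp : d < p := by have := b.isLt; omega
      have hfix : (2 : ZMod n) ^ d * (q.out).1 = (q.out).1 := by
        apply hcan a.val
        rw [← mul_assoc, ← pow_add]
        rw [show a.val + d = b.val from by omega] at *
        exact hEq2.symm
      exact (q.out).2 (hfree d _ hd0 hdp hfix)
    rcases le_total j j' with h | h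
    · rw [hjj j j' h hv]
    · rw [hjj j' j h hv.symm]
  have hfsurj : Function.Surjective f := by
    intro x
    obtain ⟨k, hk⟩ : r (Quotient.out (⟦x⟧ : Q)) x := Quotient.mk_out (s := s) x
    refine ⟨(⟨k % p, Nat.mod_lt _ hp.pos⟩, ⟦x⟧), ?_⟩
    apply Subtype.ext
    show (2 : ZMod n) ^ (k % p) * _ = x.1
    rw [hmod, hk]
  set e2 : Fin p × Q ≃ Xt := Equiv.ofBijective f ⟨hfinj, hfsurj⟩ with he2
  have he2app : ∀ jq, (e2 jq).1 = (2 : ZMod n) ^ (jq.1 : ℕ) * (jq.2.out).1 := fun _ => rfl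
  have hcard : p * Fintype.card Q = 2 ^ p - 2 := by
    have h1 : Fintype.card Xt = n - 1 := by
      calc Fintype.card Xt = Fintype.card {x : ZMod n // ¬x = 0} :=
            Fintype.card_congr (Equiv.refl _)
      _ = Fintype.card (ZMod n) - Fintype.card {x : ZMod n // x = 0} :=
            Fintype.card_subtype_compl _
      _ = n - 1 := by rw [ZMod.card, Fintype.card_subtype_eq]
    have h2 := Fintype.card_congr e2
    rw [Fintype.card_prod, Fintype.card_fin, h1] at h2
    omega
  -- the equivalence Fin n ≃ ZMod n
  set F : Fin n ≃ ZMod n :=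
    { toFun := fun k => ((k : ℕ) : ZMod n)
      invFun := fun x => ⟨x.val, ZMod.val_lt x⟩
      left_inv := fun k => by
        apply Fin.ext
        show (((k : ℕ) : ZMod n)).val = (k : ℕ)
        rw [ZMod.val_natCast, Nat.mod_eq_of_lt k.isLt]
      right_inv := fun x => ZMod.natCast_rightInverse x } with hF
  -- multiplication by 2 on ZMod n
  set σ₀ : Equiv.Perm (ZMod n) :=
    { toFun := fun x => 2 * x
      invFun := fun x => 2 ^ (p - 1) * x
      left_inv := fun x => by
        show (2 : ZMod n) ^ (p - 1) * (2 * x) = x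
        rw [← mul_assoc, mul_comm ((2 : ZMod n) ^ (p - 1)) 2, ← pow_succ']
        rw [show p - 1 + 1 = p from by omega, h2p, one_mul]
      right_inv := fun x => by
        show (2 : ZMod n) * (2 ^ (p - 1) * x) = x
        rw [← mul_assoc, mul_comm (2 : ZMod n) (2 ^ (p - 1)), ← pow_succ]
        rw [show p - 1 + 1 = p from by omega, h2p, one_mul] } with hσ₀
  set σ : Equiv.Perm (Fin n) := F.symm.permCongr σ₀ with hσ
  have hσapp : ∀ k : Fin n, σ k = F.symm (σ₀ (F k)) := by
    intro k
    rw [hσ, Equiv.permCongr_apply, Equiv.symm_symm]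
  have hσval : ∀ k : Fin n, ((σ k : Fin n) : ℕ) = 2 * (k : ℕ) % n := by
    intro k
    rw [hσapp]
    show (((2 : ZMod n) * ((k : ℕ) : ZMod n))).val = 2 * (k : ℕ) % n
    have h1 : (2 : ZMod n) * ((k : ℕ) : ZMod n) = ((2 * (k : ℕ) : ℕ) : ZMod n) := by
      push_cast; ring
    rw [h1, ZMod.val_natCast]
  -- the block-structure equivalence
  set eZero : {x : ZMod n // x = 0} ≃ Unit :=
    { toFun := fun _ => ()
      invFun := fun _ => ⟨0, rfl⟩
      left_inv := fun x => Subtype.ext x.2.symm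
      right_inv := fun _ => rfl } with heZero
  set E₀ : ZMod n ≃ Unit ⊕ (Fin p × Q) :=
    ((Equiv.sumCompl (fun x : ZMod n => x = 0)).symm).trans
      (Equiv.sumCongr eZero e2.symm) with hE₀
  set E : Fin n ≃ Unit ⊕ (Fin p × Q) := F.trans E₀ with hE
  have hE₀inl : E₀.symm (Sum.inl ()) = 0 := by
    simp [hE₀, heZero]
  have hE₀inr : ∀ (j : Fin p) (q : Q),
      E₀.symm (Sum.inr (j, q)) = (2 : ZMod n) ^ (j : ℕ) * (q.out).1 := by
    intro j q
    simp [hE₀, he2app]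
  set cyc : Equiv.Perm (Fin p) := Equiv.addRight 1 with hcyc
  set τ : Equiv.Perm (Unit ⊕ (Fin p × Q)) :=
    Equiv.sumCongr 1 (Equiv.prodCongr cyc (Equiv.refl Q)) with hτ
  have hkey : ∀ z, σ (E.symm z) = E.symm (τ z) := by
    intro z
    have hEsymm : ∀ w, E.symm w = F.symm (E₀.symm w) := fun w => rfl
    rcases z with u | ⟨j, q⟩
    · rw [hEsymm, hσapp, Equiv.apply_symm_apply]
      have hu : τ (Sum.inl u) = Sum.inl () := rfl
      rw [hu, hEsymm, hE₀inl]
      congr 1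
      show (2 : ZMod n) * 0 = 0
      rw [mul_zero]
    · rw [hEsymm, hσapp, Equiv.apply_symm_apply]
      have hu : τ (Sum.inr (j, q)) = Sum.inr (j + 1, q) := rfl
      rw [hu, hEsymm, hE₀inr, hE₀inr]
      congr 1
      show (2 : ZMod n) * (2 ^ (j : ℕ) * (q.out).1) = 2 ^ ((j + 1 : Fin p) : ℕ) * (q.out).1
      have hval : ((j + 1 : Fin p) : ℕ) = ((j : ℕ) + 1) % p := by
        rw [Fin.val_add, Fin.val_one]
      rw [hval, hmod, pow_succ, ← mul_assoc, mul_comm (2 : ZMod n) (2 ^ (j : ℕ)), mul_assoc]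
  have hperm : E.permCongr σ = τ := by
    apply Equiv.ext
    intro z
    rw [Equiv.permCongr_apply, hkey, Equiv.apply_symm_apply]
  have hpMeq : permMatC σ = pM σ := rfl
  -- unitarity
  have hU : permMatC σ ∈ Matrix.unitaryGroup (Fin n) ℂ := by
    rw [hpMeq]; exact pM_unitary σ
  refine ⟨σ, hU, ?_, ?_⟩
  · -- conjugation identity
    have hdet : IsUnit (permMatC σ).det := by
      have h1 := congrArg Matrix.det (pM_star_mul σ)
      rw [Matrix.det_mul, Matrix.det_one] at h1
      rw [mul_comm] at h1
      exact IsUnit.of_mul_eq_one _ h1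
    have hω : Complex.exp (2 * Real.pi * Complex.I / n) ^ n = 1 := by
      rw [← Complex.exp_nat_mul]
      have hne : (n : ℂ) ≠ 0 := Nat.cast_ne_zero.mpr (by omega)
      rw [show (n : ℂ) * (2 * Real.pi * Complex.I / n) = 2 * Real.pi * Complex.I from by
        field_simp]
      exact Complex.exp_two_pi_mul_I
    set ω := Complex.exp (2 * Real.pi * Complex.I / n) with hωdef
    have hωmod : ∀ a : ℕ, ω ^ (a % n) = ω ^ a := by
      intro a
      conv_rhs => rw [← Nat.div_add_mod a n]
      rw [pow_add, pow_mul, hω, one_pow, one_mul]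
    have hDT : Dmat n * permMatC σ = permMatC σ * Dmat n ^ 2 := by
      rw [show Dmat n = Matrix.diagonal fun k : Fin n => ω ^ (k : ℕ) from rfl,
        Matrix.diagonal_pow]
      ext i k
      rw [Matrix.diagonal_mul, Matrix.mul_diagonal]
      by_cases h : i = σ k
      · subst h
        rw [permMatC, Matrix.of_apply, if_pos rfl, Pi.pow_apply, hσval, hωmod, one_mul, mul_one,
          pow_mul', ← pow_mul]
      · rw [permMatC, Matrix.of_apply, if_neg h, mul_zero, zero_mul]
    rw [mul_assoc, hDT, ← mul_assoc, Matrix.nonsing_inv_mul _ hdet, one_mul]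
  · -- characteristic polynomial
    have hchar : (permMatC σ).charpoly = (X - 1) * (X ^ p - 1) ^ Fintype.card Q := by
      calc (permMatC σ).charpoly
          = (Matrix.reindex E E (pM σ)).charpoly := (Matrix.charpoly_reindex E _).symm
        _ = (pM τ).charpoly := by rw [pM_reindex, hperm]
        _ = (Matrix.fromBlocks (pM (1 : Equiv.Perm Unit)) 0 0
              (pM (Equiv.prodCongr cyc (Equiv.refl Q)))).charpoly := by
            rw [hτ, pM_sumCongr]
        _ = (pM (1 : Equiv.Perm Unit)).charpoly *
              (pM (Equiv.prodCongr cyc (Equiv.refl Q))).charpoly :=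
            Matrix.charpoly_fromBlocks_zero₂₁ _ _ _
        _ = (X - 1) * (X ^ p - 1) ^ Fintype.card Q := by
            rw [charpoly_one_unit, pM_prodCongr, charpoly_blockDiagonal]
            congr 1
            rw [hcyc, charpoly_cycle m, Finset.prod_const, Finset.card_univ]
    rw [hchar]
    congr 1
    rw [← hcard, Nat.mul_div_cancel_left _ hp.pos]
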